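/- Suppose f is bounded below by B, ∇f is L_f-Lipschitz, L > L_f, and the sequence x^{k+1} = H_K(x^k - (1/L)(∇f(x^k)+ε^k)) starts from a K-sparse x^0 with Σ_{k≥0}‖ε^k‖² = E < ∞. Then there exists D < ∞ with Σ_{k=0}^T ‖x^k - x^{k+1}‖² ≤ D for all T ≥ 0. -/

import Mathlib

noncomputable section

open scoped RealInnerProductSpace

lemma descent {N : ℕ} (f : EuclideanSpace ℝ (Fin N) → ℝ) (Lf : ℝ)
    (hf : ContDiff ℝ 1 f)
    (hlip : ∀ x y, ‖gradient f x - gradient f y‖ ≤ Lf * ‖x - y‖)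
    (a b : EuclideanSpace ℝ (Fin N)) :
    f b ≤ f a + ⟪gradient f a, b - a⟫ + Lf / 2 * ‖b - a‖ ^ 2 := by
  have hdiff : Differentiable ℝ f := hf.differentiable one_ne_zero
  set v := b - a with hv
  have hcurve : ∀ t : ℝ, HasDerivAt (fun t : ℝ => a + t • v) v t := by
    intro t
    simpa using ((hasDerivAt_id t).smul_const v).const_add a
  have hφ : ∀ t : ℝ, HasDerivAt (fun t => f (a + t • v))
      (⟪gradient f (a + t • v), v⟫) t := by
    intro t
    have h1 := ((hdiff (a + t • v)).hasGradientAt).hasFDerivAt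
    have h2 := h1.comp_hasDerivAt t (hcurve t)
    rw [InnerProductSpace.toDual_apply_apply] at h2
    exact h2
  have hgc : Continuous (gradient f) := by
    have h1 : Continuous (fderiv ℝ f) := hf.continuous_fderiv one_ne_zero
    exact (InnerProductSpace.toDual ℝ _).symm.continuous.comp h1
  have hφc : Continuous fun t : ℝ => (⟪gradient f (a + t • v), v⟫ : ℝ) := by
    exact (hgc.comp (by continuity)).inner continuous_const
  have key : f (a + (1:ℝ) • v) - f (a + (0:ℝ) • v)
      = ∫ t in (0:ℝ)..1, ⟪gradient f (a + t • v), v⟫ :=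
    (intervalIntegral.integral_eq_sub_of_hasDerivAt (fun t _ => hφ t)
      (hφc.intervalIntegrable 0 1)).symm
  have hab : a + (1:ℝ) • v = b := by simp [hv]
  rw [hab] at key
  simp only [zero_smul, add_zero] at key
  have hbound : ∫ t in (0:ℝ)..1, ⟪gradient f (a + t • v), v⟫
      ≤ ∫ t in (0:ℝ)..1, (⟪gradient f a, v⟫ + Lf * ‖v‖ ^ 2 * t) := by
    apply intervalIntegral.integral_mono_on (by norm_num)
      (hφc.intervalIntegrable 0 1)
      ((by continuity : Continuous fun t : ℝ => ⟪gradient f a, v⟫ + Lf * ‖v‖ ^ 2 * t).intervalIntegrable 0 1)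
    intro t ht
    rcases ht with ⟨ht0, ht1⟩
    have h1 : ⟪gradient f (a + t • v), v⟫ - ⟪gradient f a, v⟫
        = ⟪gradient f (a + t • v) - gradient f a, v⟫ := by
      rw [inner_sub_left]
    have h2 : ⟪gradient f (a + t • v) - gradient f a, v⟫
        ≤ ‖gradient f (a + t • v) - gradient f a‖ * ‖v‖ := real_inner_le_norm _ _
    have h3 : ‖gradient f (a + t • v) - gradient f a‖ ≤ Lf * (t * ‖v‖) := by
      have := hlip (a + t • v) a
      simpa [norm_smul, abs_of_nonneg ht0] using this
    nlinarith [norm_nonneg v, norm_nonneg (gradient f (a + t • v) - gradient f a)]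
  have hrhs : ∫ t in (0:ℝ)..1, (⟪gradient f a, v⟫ + Lf * ‖v‖ ^ 2 * t)
      = ⟪gradient f a, v⟫ + Lf / 2 * ‖v‖ ^ 2 := by
    have h1 : IntervalIntegrable (fun t : ℝ => Lf * ‖v‖ ^ 2 * t) MeasureTheory.volume 0 1 :=
      (continuous_const.mul continuous_id).intervalIntegrable 0 1
    rw [intervalIntegral.integral_add intervalIntegrable_const h1,
      intervalIntegral.integral_const_mul, integral_id]
    simp
    ring
  linarith [key, hbound, hrhs.le, hrhs.ge]

/-- A vector is `K`-sparse if it has at most `K` nonzero entries. -/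
def sparse {N : ℕ} (K : ℕ) (x : EuclideanSpace ℝ (Fin N)) : Prop :=
  (Finset.univ.filter fun i => x i ≠ 0).card ≤ K

/-- `IsHT K z x` means `x` is a result of hard thresholding `z`: a `K`-sparse vector
closest to `z` (ties broken arbitrarily). -/
def IsHT {N : ℕ} (K : ℕ) (z x : EuclideanSpace ℝ (Fin N)) : Prop :=
  sparse K x ∧ ∀ v : EuclideanSpace ℝ (Fin N), sparse K v → ‖x - z‖ ≤ ‖v - z‖

set_option maxHeartbeats 1000000 in
/-- Boundedness of partial sums of squared differences of inexact IHT iterates: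
if `f` is bounded below by `B`, `∇f` is `L_f`-Lipschitz, `L > L_f`, the errors are
square-summable with sum `E`, then there is `D < ∞` bounding all partial sums
`Σ_{k=0}^T ‖x^k - x^{k+1}‖²`. -/
theorem stmt4 {N : ℕ} (K : ℕ) (f : EuclideanSpace ℝ (Fin N) → ℝ) (B Lf L E : ℝ)
    (hf : ContDiff ℝ 1 f)
    (hB : ∀ y, B ≤ f y)
    (hlip : ∀ x y, ‖gradient f x - gradient f y‖ ≤ Lf * ‖x - y‖)
    (hL : Lf < L)
    (x ε : ℕ → EuclideanSpace ℝ (Fin N))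
    (h0 : sparse K (x 0))
    (hit : ∀ k, IsHT K (x k - (1 / L) • (gradient f (x k) + ε k)) (x (k + 1)))
    (hsum : Summable fun k => ‖ε k‖ ^ 2)
    (hE : ∑' k, ‖ε k‖ ^ 2 = E) :
    ∃ D : ℝ, ∀ T : ℕ, ∑ k ∈ Finset.range (T + 1), ‖x k - x (k + 1)‖ ^ 2 ≤ D := by
  rcases Nat.eq_zero_or_pos N with hN | hN
  · refine ⟨0, fun T => le_of_eq ?_⟩
    subst hN
    have h1 : ∀ k, x k - x (k + 1) = 0 := fun k => Subsingleton.elim _ _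
    simp [h1]
  have hLf0 : 0 ≤ Lf := by
    set e : EuclideanSpace ℝ (Fin N) := EuclideanSpace.single ⟨0, hN⟩ (1:ℝ) with he
    have h := hlip e 0
    have hn : ‖e - 0‖ = 1 := by
      simp [he, EuclideanSpace.norm_single]
    rw [hn, mul_one] at h
    exact le_trans (norm_nonneg _) h
  have hL0 : 0 < L := lt_of_le_of_lt hLf0 hL
  set c := L - Lf with hc
  have hc0 : 0 < c := by rw [hc]; linarith
  have hsp : ∀ k, sparse K (x k) := by
    intro k
    induction k with
    | zero => exact h0
    | succ n ih => exact (hit n).1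
  have hstep : ∀ k, c / 4 * ‖x k - x (k + 1)‖ ^ 2
      ≤ f (x k) - f (x (k + 1)) + (1 / c) * ‖ε k‖ ^ 2 := by
    intro k
    set w := gradient f (x k) + ε k with hw
    set Δ := x (k + 1) - x k with hΔ
    have hkey := (hit k).2 (x k) (hsp k)
    have e1 : x k - (x k - (1 / L) • w) = (1 / L) • w := by abel
    have e2 : x (k + 1) - (x k - (1 / L) • w) = Δ + (1 / L) • w := by
      rw [hΔ]; abel
    rw [e1, e2] at hkey
    have hsq : ‖Δ + (1 / L) • w‖ ^ 2 ≤ ‖(1 / L) • w‖ ^ 2 :=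
      pow_le_pow_left₀ (norm_nonneg _) hkey 2
    rw [norm_add_sq_real] at hsq
    have hinner : ⟪Δ, (1 / L) • w⟫ = (1 / L) * ⟪Δ, w⟫ := real_inner_smul_right _ _ _
    rw [hinner] at hsq
    have h1 : ⟪Δ, w⟫ ≤ -(L / 2) * ‖Δ‖ ^ 2 := by
      have h3 : (1 / L) * ⟪Δ, w⟫ ≤ -(1/2) * ‖Δ‖ ^ 2 := by linarith
      have h4 := mul_le_mul_of_nonneg_left h3 hL0.le
      rw [← mul_assoc, mul_one_div, div_self hL0.ne', one_mul] at h4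
      linarith
    have hd := descent f Lf hf hlip (x k) (x (k + 1))
    rw [← hΔ] at hd
    have h5 : ⟪gradient f (x k), Δ⟫ = ⟪Δ, w⟫ - ⟪ε k, Δ⟫ := by
      rw [hw, inner_add_right, real_inner_comm Δ (ε k),
        real_inner_comm Δ (gradient f (x k))]
      ring
    have h6 : -⟪ε k, Δ⟫ ≤ ‖ε k‖ * ‖Δ‖ := by
      have h61 := abs_le.mp (abs_real_inner_le_norm (ε k) Δ)
      linarith [h61.1]
    have h7 : ‖ε k‖ * ‖Δ‖ ≤ (1 / c) * ‖ε k‖ ^ 2 + (c / 4) * ‖Δ‖ ^ 2 := by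
      have hs := sq_nonneg (‖ε k‖ - (c / 2) * ‖Δ‖)
      have h71 : ‖ε k‖ ^ 2 - c * (‖ε k‖ * ‖Δ‖) + (c / 2) ^ 2 * ‖Δ‖ ^ 2 ≥ 0 := by
        nlinarith [hs]
      have h73 : c * ((1 / c) * ‖ε k‖ ^ 2 + (c / 4) * ‖Δ‖ ^ 2)
          = ‖ε k‖ ^ 2 + (c / 2) ^ 2 * ‖Δ‖ ^ 2 := by
        field_simp
        ring
      have h74 : c * (‖ε k‖ * ‖Δ‖) ≤ c * ((1 / c) * ‖ε k‖ ^ 2 + (c / 4) * ‖Δ‖ ^ 2) := by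
        rw [h73]; linarith [h71]
      exact le_of_mul_le_mul_left h74 hc0
    have hΔn : ‖x k - x (k + 1)‖ = ‖Δ‖ := by rw [hΔ, norm_sub_rev]
    rw [hΔn]
    linarith [hd, h1, h5, h6, h7, hc]
  refine ⟨(4 / c) * (f (x 0) - B + (1 / c) * E), fun T => ?_⟩
  have htel : ∑ k ∈ Finset.range (T + 1), (f (x k) - f (x (k + 1)))
      = f (x 0) - f (x (T + 1)) := by
    rw [← Finset.sum_range_sub' (fun k => f (x k))]
  have hεsum : ∑ k ∈ Finset.range (T + 1), ‖ε k‖ ^ 2 ≤ E := by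
    rw [← hE]
    exact Summable.sum_le_tsum _ (fun k _ => sq_nonneg _) hsum
  have hsum1 : ∑ k ∈ Finset.range (T + 1), (c / 4 * ‖x k - x (k + 1)‖ ^ 2)
      ≤ ∑ k ∈ Finset.range (T + 1), (f (x k) - f (x (k + 1)) + (1 / c) * ‖ε k‖ ^ 2) :=
    Finset.sum_le_sum fun k _ => hstep k
  rw [Finset.sum_add_distrib, htel, ← Finset.mul_sum, ← Finset.mul_sum] at hsum1
  have hB1 := hB (x (T + 1))
  have hεb : (1 / c) * ∑ k ∈ Finset.range (T + 1), ‖ε k‖ ^ 2 ≤ (1 / c) * E :=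
    mul_le_mul_of_nonneg_left hεsum (by positivity)
  have h8 : (c / 4) * ∑ k ∈ Finset.range (T + 1), ‖x k - x (k + 1)‖ ^ 2
      ≤ f (x 0) - B + (1 / c) * E := by linarith
  have h9 := mul_le_mul_of_nonneg_left h8 (le_of_lt (by positivity : (0:ℝ) < 4 / c))
  calc ∑ k ∈ Finset.range (T + 1), ‖x k - x (k + 1)‖ ^ 2
      = (4 / c) * ((c / 4) * ∑ k ∈ Finset.range (T + 1), ‖x k - x (k + 1)‖ ^ 2) := by
        field_simp
    _ ≤ (4 / c) * (f (x 0) - B + (1 / c) * E) := h9
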